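/- Let S ⊆ [m] × [n] be a finite set such that the bipartite graph G_S is doubly chordal bipartite, and let C = A_1 × B_0 ∈ Int(S). Define recursively, for k ≥ 2, A_k = { i ∈ [m] : i ∉ A_{k−1} and there exists j ∈ B_{k−1} with (i,j) ∈ S }, and, for k ≥ 1, B_k = { j ∈ [n] : j ∉ B_{k−1} and there exists i ∈ A_k with (i,j) ∈ S }. Then the sets A_1, A_2, A_3, … are pairwise disjoint; consequently there exists K such that A_k = ∅ and B_k = ∅ for all k ≥ K. -/

import Mathlib

/-- A clique in `S ⊆ [m] × [n]` is a nonempty subset of `S` of the form `R × C`. -/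
def IsCliqueIn {m n : ℕ} (S D : Finset (Fin m × Fin n)) : Prop :=
  D.Nonempty ∧ D ⊆ S ∧ ∃ (R : Finset (Fin m)) (C : Finset (Fin n)), D = R ×ˢ C

/-- A maximal clique of `S`, i.e. an element of `Max(S)`. -/
def IsMaxCliqueIn {m n : ℕ} (S D : Finset (Fin m × Fin n)) : Prop :=
  IsCliqueIn S D ∧ ∀ E, IsCliqueIn S E → D ⊆ E → D = E

/-- A nonempty intersection of two distinct maximal cliques of `S`. -/
def IsPairIntersection {m n : ℕ} (S C : Finset (Fin m × Fin n)) : Prop :=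
  ∃ D E, IsMaxCliqueIn S D ∧ IsMaxCliqueIn S E ∧ D ≠ E ∧ C = D ∩ E ∧ C.Nonempty

/-- An element of `Int(S)`: a containment-maximal pairwise intersection of maximal cliques. -/
def IsMaxIntersection {m n : ℕ} (S C : Finset (Fin m × Fin n)) : Prop :=
  IsPairIntersection S C ∧ ∀ C', IsPairIntersection S C' → C ⊆ C' → C = C'

/-- The bipartite graph `G_S` on `[m] ⊔ [n]` with an edge `i ~ j` iff `(i,j) ∈ S`. -/
def graphOf {m n : ℕ} (S : Finset (Fin m × Fin n)) : SimpleGraph (Fin m ⊕ Fin n) :=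
  SimpleGraph.fromRel fun u v => ∃ p ∈ S, u = Sum.inl p.1 ∧ v = Sum.inr p.2

/-- The cycle graph on `ℓ` vertices. -/
def cycleGraph (ℓ : ℕ) : SimpleGraph (ZMod ℓ) :=
  SimpleGraph.fromRel fun u v => v = u + 1

/-- The double square graph: two 4-cycles glued along a common edge. -/
def doubleSquare : SimpleGraph (Fin 3 ⊕ Fin 3) :=
  SimpleGraph.fromRel fun u v =>
    (u, v) ∈ ([(Sum.inl 0, Sum.inr 0), (Sum.inl 0, Sum.inr 1), (Sum.inl 1, Sum.inr 0),
      (Sum.inl 1, Sum.inr 1), (Sum.inl 1, Sum.inr 2), (Sum.inl 2, Sum.inr 1),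
      (Sum.inl 2, Sum.inr 2)] : List ((Fin 3 ⊕ Fin 3) × (Fin 3 ⊕ Fin 3)))

/-- `G` contains an induced copy of `H`. -/
def HasInducedCopy {V W : Type*} (H : SimpleGraph V) (G : SimpleGraph W) : Prop :=
  ∃ f : V → W, Function.Injective f ∧ ∀ u v, H.Adj u v ↔ G.Adj (f u) (f v)

/-- A graph is doubly chordal bipartite if it has no induced cycle of length at least 6 and
no induced double square. -/
def DoublyChordalBipartite {V : Type*} (G : SimpleGraph V) : Prop :=
  (∀ ℓ : ℕ, 6 ≤ ℓ → ¬ HasInducedCopy (cycleGraph ℓ) G) ∧ ¬ HasInducedCopy doubleSquare G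


variable {m n : ℕ}

section prelim

lemma prod_inter_prod' (R R' : Finset (Fin m)) (C C' : Finset (Fin n)) :
    (R ×ˢ C) ∩ (R' ×ˢ C') = (R ∩ R') ×ˢ (C ∩ C') := by
  ext ⟨i, j⟩; simp [Finset.mem_product, Finset.mem_inter]; tauto

lemma prod_eq_prod_iff {R R' : Finset (Fin m)} {C C' : Finset (Fin n)}
    (hne : (R ×ˢ C).Nonempty) (h : R ×ˢ C = R' ×ˢ C') : R = R' ∧ C = C' := by
  obtain ⟨⟨a, b⟩, hab⟩ := hne
  rw [Finset.mem_product] at hab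
  have hab' : (a, b) ∈ R' ×ˢ C' := h ▸ (Finset.mem_product.2 hab)
  rw [Finset.mem_product] at hab'
  constructor
  · ext x
    constructor
    · intro hx
      have : (x, b) ∈ R' ×ˢ C' := h ▸ Finset.mem_product.2 ⟨hx, hab.2⟩
      exact (Finset.mem_product.1 this).1
    · intro hx
      have : (x, b) ∈ R ×ˢ C := h.symm ▸ Finset.mem_product.2 ⟨hx, hab'.2⟩
      exact (Finset.mem_product.1 this).1
  · ext y
    constructor
    · intro hy
      have : (a, y) ∈ R' ×ˢ C' := h ▸ Finset.mem_product.2 ⟨hab.1, hy⟩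
      exact (Finset.mem_product.1 this).2
    · intro hy
      have : (a, y) ∈ R ×ˢ C := h.symm ▸ Finset.mem_product.2 ⟨hab'.1, hy⟩
      exact (Finset.mem_product.1 this).2

lemma exists_maxCliqueIn {S D : Finset (Fin m × Fin n)} (hD : IsCliqueIn S D) :
    ∃ F, IsMaxCliqueIn S F ∧ D ⊆ F := by
  classical
  set T := S.powerset.filter (fun F => IsCliqueIn S F ∧ D ⊆ F) with hT
  have hDT : D ∈ T := by
    simp only [hT, Finset.mem_filter, Finset.mem_powerset]
    exact ⟨hD.2.1, hD, le_refl _⟩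
  obtain ⟨F, hFT, hmax⟩ := T.exists_max_image (fun F => F.card) ⟨D, hDT⟩
  simp only [hT, Finset.mem_filter, Finset.mem_powerset] at hFT
  refine ⟨F, ⟨hFT.2.1, ?_⟩, hFT.2.2⟩
  intro E hE hFE
  have hET : E ∈ T := by
    simp only [hT, Finset.mem_filter, Finset.mem_powerset]
    exact ⟨hE.2.1, hE, hFT.2.2.trans hFE⟩
  exact Finset.eq_of_subset_of_card_le hFE (hmax E hET)

lemma mem_rows_of_maxClique {S : Finset (Fin m × Fin n)} {R : Finset (Fin m)}
    {C : Finset (Fin n)} (hmax : IsMaxCliqueIn S (R ×ˢ C)) (hC : C.Nonempty)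
    (r : Fin m) (hr : ∀ c ∈ C, (r, c) ∈ S) : r ∈ R := by
  have hclique : IsCliqueIn S ((insert r R) ×ˢ C) := by
    refine ⟨?_, ?_, insert r R, C, rfl⟩
    · rw [Finset.nonempty_product]
      exact ⟨Finset.insert_nonempty _ _, hC⟩
    · intro ⟨i, j⟩ hij
      rw [Finset.mem_product, Finset.mem_insert] at hij
      rcases hij.1 with h | h
      · subst h; exact hr j hij.2
      · exact hmax.1.2.1 (Finset.mem_product.2 ⟨h, hij.2⟩)
  have := hmax.2 _ hclique (Finset.product_subset_product (Finset.subset_insert _ _) le_rfl)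
  obtain ⟨c, hc⟩ := hC
  have : (r, c) ∈ R ×ˢ C := this ▸ Finset.mem_product.2 ⟨Finset.mem_insert_self _ _, hc⟩
  exact (Finset.mem_product.1 this).1

lemma mem_cols_of_maxClique {S : Finset (Fin m × Fin n)} {R : Finset (Fin m)}
    {C : Finset (Fin n)} (hmax : IsMaxCliqueIn S (R ×ˢ C)) (hR : R.Nonempty)
    (c : Fin n) (hc : ∀ r ∈ R, (r, c) ∈ S) : c ∈ C := by
  have hclique : IsCliqueIn S (R ×ˢ (insert c C)) := by
    refine ⟨?_, ?_, R, insert c C, rfl⟩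
    · rw [Finset.nonempty_product]
      exact ⟨hR, Finset.insert_nonempty _ _⟩
    · intro ⟨i, j⟩ hij
      rw [Finset.mem_product, Finset.mem_insert] at hij
      rcases hij.2 with h | h
      · subst h; exact hc i hij.1
      · exact hmax.1.2.1 (Finset.mem_product.2 ⟨hij.1, h⟩)
  have := hmax.2 _ hclique (Finset.product_subset_product le_rfl (Finset.subset_insert _ _))
  obtain ⟨r, hr⟩ := hR
  have : (r, c) ∈ R ×ˢ C := this ▸ Finset.mem_product.2 ⟨hr, Finset.mem_insert_self _ _⟩
  exact (Finset.mem_product.1 this).2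

variable {S : Finset (Fin m × Fin n)}

lemma graphOf_adj_inl_inr {i : Fin m} {j : Fin n} :
    (graphOf S).Adj (Sum.inl i) (Sum.inr j) ↔ (i, j) ∈ S := by
  simp [graphOf, SimpleGraph.fromRel_adj]

lemma graphOf_adj_inr_inl {i : Fin m} {j : Fin n} :
    (graphOf S).Adj (Sum.inr j) (Sum.inl i) ↔ (i, j) ∈ S := by
  rw [SimpleGraph.adj_comm]; exact graphOf_adj_inl_inr

lemma graphOf_not_adj_inl_inl {i i' : Fin m} :
    ¬ (graphOf S).Adj (Sum.inl i) (Sum.inl i') := by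
  simp [graphOf, SimpleGraph.fromRel_adj]

lemma graphOf_not_adj_inr_inr {j j' : Fin n} :
    ¬ (graphOf S).Adj (Sum.inr j) (Sum.inr j') := by
  simp [graphOf, SimpleGraph.fromRel_adj]

lemma doubleSquare_adj_inl_inr (x y : Fin 3) : doubleSquare.Adj (Sum.inl x) (Sum.inr y) ↔
    (x, y) ∈ ([(0,0),(0,1),(1,0),(1,1),(1,2),(2,1),(2,2)] : List (Fin 3 × Fin 3)) := by
  rw [doubleSquare, SimpleGraph.fromRel_adj]
  fin_cases x <;> fin_cases y <;> simp

lemma doubleSquare_not_adj_inl_inl (x y : Fin 3) : ¬ doubleSquare.Adj (Sum.inl x) (Sum.inl y) := by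
  rw [doubleSquare, SimpleGraph.fromRel_adj]
  fin_cases x <;> fin_cases y <;> simp

lemma doubleSquare_not_adj_inr_inr (x y : Fin 3) : ¬ doubleSquare.Adj (Sum.inr x) (Sum.inr y) := by
  rw [doubleSquare, SimpleGraph.fromRel_adj]
  fin_cases x <;> fin_cases y <;> simp

lemma hasInducedCopy_doubleSquare (u : Fin 3 → Fin m) (v : Fin 3 → Fin n)
    (hS : ∀ x y : Fin 3, (u x, v y) ∈ S ↔
      (x, y) ∈ ([(0,0),(0,1),(1,0),(1,1),(1,2),(2,1),(2,2)] : List (Fin 3 × Fin 3)))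
    (hu : Function.Injective u) (hv : Function.Injective v) :
    HasInducedCopy doubleSquare (graphOf S) := by
  refine ⟨Sum.map u v, ?_, ?_⟩
  · intro a b hab
    cases a <;> cases b <;> simp [Sum.map] at hab ⊢ <;>
      first | exact hu hab | exact hv hab
  · rintro (x | x) (y | y)
    · simp only [Sum.map, Sum.elim_inl, Function.comp]
      simp [doubleSquare_not_adj_inl_inl, graphOf_not_adj_inl_inl]
    · simp only [Sum.map, Sum.elim_inl, Sum.elim_inr, Function.comp]
      rw [graphOf_adj_inl_inr, hS, doubleSquare_adj_inl_inr]
    · simp only [Sum.map, Sum.elim_inl, Sum.elim_inr, Function.comp]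
      rw [graphOf_adj_inr_inl, hS, doubleSquare.adj_comm, doubleSquare_adj_inl_inr]
    · simp only [Sum.map, Sum.elim_inr, Function.comp]
      simp [doubleSquare_not_adj_inr_inr, graphOf_not_adj_inr_inr]

lemma inj3 {α : Type*} {a b c : α} (hab : a ≠ b) (hac : a ≠ c) (hbc : b ≠ c) :
    Function.Injective ![a, b, c] := by
  intro x y hxy
  fin_cases x <;> fin_cases y <;>
    simp_all [hab, hac, hbc, hab.symm, hac.symm, hbc.symm]

end prelim

/-- Building an induced cycle of length `2*d` in `graphOf S` from alternating sequences of rows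
`I 1, …, I d` and columns `J 0, …, J (d-1)`. -/
lemma hasInducedCopy_cycle (d : ℕ) (hd : 3 ≤ d) (I : ℕ → Fin m) (J : ℕ → Fin n)
    (hIinj : ∀ s s', 1 ≤ s → s ≤ d → 1 ≤ s' → s' ≤ d → I s = I s' → s = s')
    (hJinj : ∀ t t', t + 1 ≤ d → t' + 1 ≤ d → J t = J t' → t = t')
    (hedge : ∀ s t, 1 ≤ s → s ≤ d → t + 1 ≤ d →
      ((I s, J t) ∈ S ↔ (t + 1 = s ∨ (t = s ∧ s + 1 ≤ d) ∨ (s = d ∧ t = 0)))) :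
    HasInducedCopy (cycleGraph (2 * d)) (graphOf S) := by
  haveI : NeZero (2 * d) := ⟨by omega⟩
  haveI : Fact (1 < 2 * d) := ⟨by omega⟩
  set N := 2 * d with hN
  set f : ZMod N → Fin m ⊕ Fin n :=
    fun x => if 2 ∣ x.val then Sum.inr (J (x.val / 2)) else Sum.inl (I ((x.val + 1) / 2)) with hf
  have hvlt : ∀ x : ZMod N, x.val < N := fun x => ZMod.val_lt x
  have hsucc : ∀ u v : ZMod N, v = u + 1 ↔ (v.val = u.val + 1 ∨ (u.val = N - 1 ∧ v.val = 0)) := by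
    intro u v
    have h1 : (u + 1).val = (u.val + 1) % N := by rw [ZMod.val_add, ZMod.val_one]
    constructor
    · intro h
      subst h
      rcases Nat.lt_or_ge (u.val + 1) N with hlt | hge
      · left; rw [h1, Nat.mod_eq_of_lt hlt]
      · have hu := hvlt u
        have h2 : u.val + 1 = N := by omega
        right
        refine ⟨by omega, ?_⟩
        rw [h1, h2, Nat.mod_self]
    · intro h
      apply ZMod.val_injective
      rcases h with h | ⟨h2, h3⟩
      · rw [h1, Nat.mod_eq_of_lt (by have := hvlt v; omega)]
        exact h
      · rw [h1, h3]
        have h4 : u.val + 1 = N := by have := hvlt u; omega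
        rw [h4, Nat.mod_self]
  -- the basic edge facts of f
  have hfe : ∀ x : ZMod N, 2 ∣ x.val → f x = Sum.inr (J (x.val / 2)) := by
    intro x hx; simp [hf, hx]
  have hfo : ∀ x : ZMod N, ¬ 2 ∣ x.val → f x = Sum.inl (I ((x.val + 1) / 2)) := by
    intro x hx; simp [hf, hx]
  refine ⟨f, ?_, ?_⟩
  · -- injectivity
    intro x y hxy
    rcases Nat.even_or_odd x.val with hx | hx <;> rcases Nat.even_or_odd y.val with hy | hy
    · rw [hfe x hx.two_dvd, hfe y hy.two_dvd] at hxy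
      have := hJinj (x.val / 2) (y.val / 2)
        (by have := hvlt x; obtain ⟨a, ha⟩ := hx; omega)
        (by have := hvlt y; obtain ⟨a, ha⟩ := hy; omega) (Sum.inr.inj hxy)
      apply ZMod.val_injective
      obtain ⟨a, ha⟩ := hx; obtain ⟨b, hb⟩ := hy; omega
    · rw [hfe x hx.two_dvd, hfo y (by rwa [Nat.odd_iff, ← Nat.two_dvd_ne_zero] at hy)] at hxy
      exact absurd hxy (by simp)
    · rw [hfo x (by rwa [Nat.odd_iff, ← Nat.two_dvd_ne_zero] at hx), hfe y hy.two_dvd] at hxy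
      exact absurd hxy (by simp)
    · rw [hfo x (by rwa [Nat.odd_iff, ← Nat.two_dvd_ne_zero] at hx),
        hfo y (by rwa [Nat.odd_iff, ← Nat.two_dvd_ne_zero] at hy)] at hxy
      have := hIinj ((x.val + 1) / 2) ((y.val + 1) / 2)
        (by obtain ⟨a, ha⟩ := hx; omega)
        (by have := hvlt x; obtain ⟨a, ha⟩ := hx; omega)
        (by obtain ⟨a, ha⟩ := hy; omega)
        (by have := hvlt y; obtain ⟨a, ha⟩ := hy; omega) (Sum.inl.inj hxy)
      apply ZMod.val_injective
      obtain ⟨a, ha⟩ := hx; obtain ⟨b, hb⟩ := hy; omega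
  · -- adjacency
    have key : ∀ u v : ZMod N, v = u + 1 → (graphOf S).Adj (f u) (f v) := by
      intro u v h
      rw [hsucc] at h
      have hu := hvlt u
      have hv := hvlt v
      rcases Nat.even_or_odd u.val with hx | hx
      · -- u even, so u.val ≤ N - 2, hence v.val = u.val + 1
        obtain ⟨a, ha⟩ := hx
        have hva : v.val = u.val + 1 := by omega
        rw [hfe u (by omega), hfo v (by omega)]
        rw [graphOf_adj_inr_inl]
        have h2 : (v.val + 1) / 2 = a + 1 := by omega
        have h3 : u.val / 2 = a := by omega
        rw [h2, h3, hedge (a + 1) a (by omega) (by omega) (by omega)]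
        left; omega
      · obtain ⟨a, ha⟩ := hx
        by_cases hlast : u.val = N - 1
        · -- wrap-around edge
          have hva : v.val = 0 := by omega
          rw [hfo u (by omega), hfe v (by omega)]
          rw [graphOf_adj_inl_inr]
          have h2 : (u.val + 1) / 2 = d := by omega
          have h3 : v.val / 2 = 0 := by omega
          rw [h2, h3, hedge d 0 (by omega) (by omega) (by omega)]
          right; right; exact ⟨rfl, rfl⟩
        · have hva : v.val = u.val + 1 := by omega
          rw [hfo u (by omega), hfe v (by omega)]
          rw [graphOf_adj_inl_inr]
          have h2 : (u.val + 1) / 2 = a + 1 := by omega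
          have h3 : v.val / 2 = a + 1 := by omega
          rw [h2, h3, hedge (a + 1) (a + 1) (by omega) (by omega) (by omega)]
          right; left; exact ⟨rfl, by omega⟩
    intro u v
    rw [cycleGraph, SimpleGraph.fromRel_adj]
    constructor
    · rintro ⟨hne, h | h⟩
      · exact key u v h
      · exact (key v u h).symm
    · intro hadj
      have hu := hvlt u
      have hv := hvlt v
      rcases Nat.even_or_odd u.val with hx | hx <;> rcases Nat.even_or_odd v.val with hy | hy
      · rw [hfe u hx.two_dvd, hfe v hy.two_dvd] at hadj
        exact absurd hadj graphOf_not_adj_inr_inr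
      · -- u even (column), v odd (row)
        obtain ⟨a, ha⟩ := hx; obtain ⟨b, hb⟩ := hy
        rw [hfe u (by omega), hfo v (by omega)] at hadj
        rw [graphOf_adj_inr_inl] at hadj
        have hs : (v.val + 1) / 2 = b + 1 := by omega
        have ht : u.val / 2 = a := by omega
        rw [hs, ht, hedge (b + 1) a (by omega) (by omega) (by omega)] at hadj
        refine ⟨by intro he; rw [he] at ha; omega, ?_⟩
        rcases hadj with h | ⟨h1, h2⟩ | ⟨h1, h2⟩
        · left; rw [hsucc]; omega
        · right; rw [hsucc]; omega
        · right; rw [hsucc]; omega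
      · obtain ⟨a, ha⟩ := hy; obtain ⟨b, hb⟩ := hx
        rw [hfo u (by omega), hfe v (by omega)] at hadj
        rw [graphOf_adj_inl_inr] at hadj
        have hs : (u.val + 1) / 2 = b + 1 := by omega
        have ht : v.val / 2 = a := by omega
        rw [hs, ht, hedge (b + 1) a (by omega) (by omega) (by omega)] at hadj
        refine ⟨by intro he; rw [he] at hb; omega, ?_⟩
        rcases hadj with h | ⟨h1, h2⟩ | ⟨h1, h2⟩
        · right; rw [hsucc]; omega
        · left; rw [hsucc]; omega
        · left; rw [hsucc]; omega
      · rw [hfo u (by obtain ⟨a, ha⟩ := hx; omega), hfo v (by obtain ⟨a, ha⟩ := hy; omega)] at hadj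
        exact absurd hadj graphOf_not_adj_inl_inl

/-- The key distance-2 lemma: a row outside `A1` cannot be adjacent both to a column of `B0`
and to a column outside `B0` having a neighbour in `A1`. -/
lemma base2 {S : Finset (Fin m × Fin n)} (hG : DoublyChordalBipartite (graphOf S))
    {A1 : Finset (Fin m)} {B0 : Finset (Fin n)} (hC : IsMaxIntersection S (A1 ×ˢ B0))
    {i1 i2 : Fin m} {js j1 : Fin n}
    (hi1 : i1 ∈ A1) (hjs : js ∈ B0) (hi2 : i2 ∉ A1) (hj1 : j1 ∉ B0)
    (e2s : (i2, js) ∈ S) (e21 : (i2, j1) ∈ S) (e11 : (i1, j1) ∈ S) : False := by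
  classical
  obtain ⟨⟨D, E, hD, hE, hDE, hCeq, hCne⟩, hCmax⟩ := hC
  obtain ⟨RD, CD, rfl⟩ := hD.1.2.2
  obtain ⟨RE, CE, rfl⟩ := hE.1.2.2
  rw [prod_inter_prod'] at hCeq
  obtain ⟨hA1eq, hB0eq⟩ := prod_eq_prod_iff hCne hCeq
  have hA1ne : A1.Nonempty := ⟨i1, hi1⟩
  have hB0ne : B0.Nonempty := ⟨js, hjs⟩
  have hA1D : A1 ⊆ RD := hA1eq ▸ Finset.inter_subset_left
  have hA1E : A1 ⊆ RE := hA1eq ▸ Finset.inter_subset_right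
  have hB0D : B0 ⊆ CD := hB0eq ▸ Finset.inter_subset_left
  have hB0E : B0 ⊆ CE := hB0eq ▸ Finset.inter_subset_right
  have eD : ∀ i ∈ RD, ∀ j ∈ CD, (i, j) ∈ S := fun i hi j hj =>
    hD.1.2.1 (Finset.mem_product.2 ⟨hi, hj⟩)
  have eE : ∀ i ∈ RE, ∀ j ∈ CE, (i, j) ∈ S := fun i hi j hj =>
    hE.1.2.1 (Finset.mem_product.2 ⟨hi, hj⟩)
  have eA1B0 : ∀ i ∈ A1, ∀ j ∈ B0, (i, j) ∈ S := fun i hi j hj =>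
    eD i (hA1D hi) j (hB0D hj)
  have hRDne : RD.Nonempty := hA1ne.mono hA1D
  have hREne : RE.Nonempty := hA1ne.mono hA1E
  have hCDne : CD.Nonempty := hB0ne.mono hB0D
  have hCEne : CE.Nonempty := hB0ne.mono hB0E
  -- Step 1: `i2` is adjacent to every column of `B0`.
  have step1 : ∀ j' ∈ B0, (i2, j') ∈ S := by
    intro j' hj'B0
    by_contra hne2
    have hr : ∃ r, (r, j') ∈ S ∧ (r, js) ∈ S ∧ (r, j1) ∉ S := by
      by_contra hno
      push_neg at hno
      have hD1 : j1 ∈ CD := mem_cols_of_maxClique hD hRDne j1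
        (fun r hr => hno r (eD r hr j' (hB0D hj'B0)) (eD r hr js (hB0D hjs)))
      have hE1 : j1 ∈ CE := mem_cols_of_maxClique hE hREne j1
        (fun r hr => hno r (eE r hr j' (hB0E hj'B0)) (eE r hr js (hB0E hjs)))
      exact hj1 (hB0eq ▸ Finset.mem_inter.2 ⟨hD1, hE1⟩)
    obtain ⟨r, hr1, hr2, hr3⟩ := hr
    apply hG.2
    refine hasInducedCopy_doubleSquare ![r, i1, i2] ![j', js, j1] ?_ ?_ ?_
    · intro x y
      fin_cases x <;> fin_cases y <;>
        simp [hr1, hr2, hr3, eA1B0 i1 hi1 j' hj'B0, eA1B0 i1 hi1 js hjs, e11, hne2, e2s, e21]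
    · refine inj3 ?_ ?_ ?_
      · intro h; exact hr3 (h ▸ e11)
      · intro h; exact hne2 (h ▸ hr1)
      · intro h; exact hi2 (h ▸ hi1)
    · refine inj3 ?_ ?_ ?_
      · intro h; exact hne2 (h ▸ e2s)
      · intro h; exact hj1 (h ▸ hj'B0)
      · intro h; exact hj1 (h ▸ hjs)
  -- Step 2: `j1` is adjacent to every row of `A1`.
  have step2 : ∀ i' ∈ A1, (i', j1) ∈ S := by
    intro i' hi'A1
    by_contra hne2
    have hv : ∃ c, (c ∈ CD ∨ c ∈ CE) ∧ (i2, c) ∉ S := by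
      by_contra hno
      push_neg at hno
      have h1 : i2 ∈ RD := mem_rows_of_maxClique hD hCDne i2 (fun c hc => hno c (Or.inl hc))
      have h2 : i2 ∈ RE := mem_rows_of_maxClique hE hCEne i2 (fun c hc => hno c (Or.inr hc))
      exact hi2 (hA1eq ▸ Finset.mem_inter.2 ⟨h1, h2⟩)
    obtain ⟨v1, hv1mem, hv1⟩ := hv
    have hv1edges : ∀ i ∈ A1, (i, v1) ∈ S := by
      intro i hi
      rcases hv1mem with h | h
      · exact eD i (hA1D hi) v1 h
      · exact eE i (hA1E hi) v1 h
    apply hG.2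
    refine hasInducedCopy_doubleSquare ![i', i1, i2] ![v1, js, j1] ?_ ?_ ?_
    · intro x y
      fin_cases x <;> fin_cases y <;>
        simp [hv1edges i' hi'A1, eA1B0 i' hi'A1 js hjs, hne2, hv1edges i1 hi1,
          eA1B0 i1 hi1 js hjs, e11, hv1, step1 js hjs, e21]
    · refine inj3 ?_ ?_ ?_
      · intro h; exact hne2 (h ▸ e11)
      · intro h; exact hi2 (h ▸ hi'A1)
      · intro h; exact hi2 (h ▸ hi1)
    · refine inj3 ?_ ?_ ?_
      · intro h; exact hv1 (h ▸ e2s)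
      · intro h; exact hne2 (h ▸ hv1edges i' hi'A1)
      · intro h; exact hj1 (h ▸ hjs)
  -- Step 3.
  have key : ∀ (RX : Finset (Fin m)) (CX : Finset (Fin n)), IsMaxCliqueIn S (RX ×ˢ CX) →
      A1 ⊆ RX → B0 ⊆ CX → i2 ∉ RX → False := by
    intro RX CX hX hA1X hB0X hi2X
    by_cases hj1X : j1 ∈ CX
    · -- 3a
      have hFclique : IsCliqueIn S ((insert i2 A1) ×ˢ (insert j1 B0)) := by
        refine ⟨?_, ?_, _, _, rfl⟩
        · rw [Finset.nonempty_product]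
          exact ⟨Finset.insert_nonempty _ _, Finset.insert_nonempty _ _⟩
        · intro ⟨i, j⟩ hij
          rw [Finset.mem_product, Finset.mem_insert, Finset.mem_insert] at hij
          obtain ⟨hi | hi, hj | hj⟩ := hij
          · subst hi; subst hj; exact e21
          · subst hi; exact step1 j hj
          · subst hj; exact step2 i hi
          · exact eA1B0 i hi j hj
      obtain ⟨F, hF, hsubF⟩ := exists_maxCliqueIn hFclique
      obtain ⟨RF, CF, rfl⟩ := hF.1.2.2
      have hmemF : ∀ i ∈ insert i2 A1, ∀ j ∈ insert j1 B0, (i, j) ∈ RF ×ˢ CF :=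
        fun i hi j hj => hsubF (Finset.mem_product.2 ⟨hi, hj⟩)
      have hi2RF : i2 ∈ RF :=
        (Finset.mem_product.1 (hmemF i2 (Finset.mem_insert_self _ _) j1
          (Finset.mem_insert_self _ _))).1
      have hA1RF : A1 ⊆ RF := fun i hi =>
        (Finset.mem_product.1 (hmemF i (Finset.mem_insert_of_mem hi) j1
          (Finset.mem_insert_self _ _))).1
      have hj1CF : j1 ∈ CF :=
        (Finset.mem_product.1 (hmemF i2 (Finset.mem_insert_self _ _) j1
          (Finset.mem_insert_self _ _))).2
      have hB0CF : B0 ⊆ CF := fun j hj =>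
        (Finset.mem_product.1 (hmemF i2 (Finset.mem_insert_self _ _) j
          (Finset.mem_insert_of_mem hj))).2
      have hne : RX ×ˢ CX ≠ RF ×ˢ CF := by
        intro h
        have : (i2, js) ∈ RX ×ˢ CX := h ▸ Finset.mem_product.2 ⟨hi2RF, hB0CF hjs⟩
        exact hi2X (Finset.mem_product.1 this).1
      have hpair : IsPairIntersection S ((RX ∩ RF) ×ˢ (CX ∩ CF)) := by
        refine ⟨_, _, hX, hF, hne, (prod_inter_prod' _ _ _ _).symm, ?_⟩
        exact ⟨(i1, js), Finset.mem_product.2 ⟨Finset.mem_inter.2 ⟨hA1X hi1, hA1RF hi1⟩,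
          Finset.mem_inter.2 ⟨hB0X hjs, hB0CF hjs⟩⟩⟩
      have hsub : A1 ×ˢ B0 ⊆ (RX ∩ RF) ×ˢ (CX ∩ CF) := by
        refine Finset.product_subset_product ?_ ?_
        · intro i hi; exact Finset.mem_inter.2 ⟨hA1X hi, hA1RF hi⟩
        · intro j hj; exact Finset.mem_inter.2 ⟨hB0X hj, hB0CF hj⟩
      have heq := hCmax _ hpair hsub
      have : (i1, j1) ∈ A1 ×ˢ B0 := by
        rw [heq]
        exact Finset.mem_product.2 ⟨Finset.mem_inter.2 ⟨hA1X hi1, hA1RF hi1⟩,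
          Finset.mem_inter.2 ⟨hj1X, hj1CF⟩⟩
      exact hj1 (Finset.mem_product.1 this).2
    · -- 3b
      have hGclique : IsCliqueIn S ((insert i2 RX) ×ˢ B0) := by
        refine ⟨?_, ?_, _, _, rfl⟩
        · rw [Finset.nonempty_product]
          exact ⟨Finset.insert_nonempty _ _, hB0ne⟩
        · intro ⟨i, j⟩ hij
          rw [Finset.mem_product, Finset.mem_insert] at hij
          obtain ⟨hi | hi, hj⟩ := hij
          · subst hi; exact step1 j hj
          · exact hX.1.2.1 (Finset.mem_product.2 ⟨hi, hB0X hj⟩)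
      obtain ⟨G, hGm, hsubG⟩ := exists_maxCliqueIn hGclique
      obtain ⟨RG, CG, rfl⟩ := hGm.1.2.2
      have hmemG : ∀ i ∈ insert i2 RX, ∀ j ∈ B0, (i, j) ∈ RG ×ˢ CG :=
        fun i hi j hj => hsubG (Finset.mem_product.2 ⟨hi, hj⟩)
      have hi2RG : i2 ∈ RG :=
        (Finset.mem_product.1 (hmemG i2 (Finset.mem_insert_self _ _) js hjs)).1
      have hRXRG : RX ⊆ RG := fun i hi =>
        (Finset.mem_product.1 (hmemG i (Finset.mem_insert_of_mem hi) js hjs)).1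
      have hB0CG : B0 ⊆ CG := fun j hj =>
        (Finset.mem_product.1 (hmemG i2 (Finset.mem_insert_self _ _) j hj)).2
      have hne : RX ×ˢ CX ≠ RG ×ˢ CG := by
        intro h
        have : (i2, js) ∈ RX ×ˢ CX := h ▸ Finset.mem_product.2 ⟨hi2RG, hB0CG hjs⟩
        exact hi2X (Finset.mem_product.1 this).1
      have hpair : IsPairIntersection S ((RX ∩ RG) ×ˢ (CX ∩ CG)) := by
        refine ⟨_, _, hX, hGm, hne, (prod_inter_prod' _ _ _ _).symm, ?_⟩
        exact ⟨(i1, js), Finset.mem_product.2 ⟨Finset.mem_inter.2 ⟨hA1X hi1, hRXRG (hA1X hi1)⟩,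
          Finset.mem_inter.2 ⟨hB0X hjs, hB0CG hjs⟩⟩⟩
      have hsub : A1 ×ˢ B0 ⊆ (RX ∩ RG) ×ˢ (CX ∩ CG) := by
        refine Finset.product_subset_product ?_ ?_
        · intro i hi; exact Finset.mem_inter.2 ⟨hA1X hi, hRXRG (hA1X hi)⟩
        · intro j hj; exact Finset.mem_inter.2 ⟨hB0X hj, hB0CG hj⟩
      have heq := hCmax _ hpair hsub
      obtain ⟨hrows, _⟩ := prod_eq_prod_iff hCne heq
      have hRXA1 : RX = A1 := by
        rw [hrows]
        exact (Finset.inter_eq_left.2 hRXRG).symm ▸ rfl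
      have : j1 ∈ CX := mem_cols_of_maxClique hX (hA1ne.mono hA1X) j1
        (fun r hr => step2 r (hRXA1 ▸ hr))
      exact hj1X this
  -- conclude
  have : i2 ∉ RD ∨ i2 ∉ RE := by
    by_contra hno
    push_neg at hno
    exact hi2 (hA1eq ▸ Finset.mem_inter.2 ⟨hno.1, hno.2⟩)
  rcases this with h | h
  · exact key RD CD hD hA1D hB0D h
  · exact key RE CE hE hA1E hB0E h

/-- Let `G_S` be doubly chordal bipartite and `C = A 1 ×ˢ B 0 ∈ Int(S)`, with
the sets `A k` (for `k ≥ 2`) and `B k` (for `k ≥ 1`) defined by the recursions of the paper.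
Then the sets `A 1, A 2, A 3, …` are pairwise disjoint, and consequently `A k` and `B k` are
empty for all sufficiently large `k`. -/
theorem stmt12 {m n : ℕ} (S : Finset (Fin m × Fin n))
    (hG : DoublyChordalBipartite (graphOf S))
    (A : ℕ → Finset (Fin m)) (B : ℕ → Finset (Fin n))
    (hC : IsMaxIntersection S (A 1 ×ˢ B 0))
    (hA : ∀ k, 2 ≤ k →
      A k = Finset.univ.filter fun i => i ∉ A (k - 1) ∧ ∃ j ∈ B (k - 1), (i, j) ∈ S)
    (hB : ∀ k, 1 ≤ k →
      B k = Finset.univ.filter fun j => j ∉ B (k - 1) ∧ ∃ i ∈ A k, (i, j) ∈ S) :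
    (∀ k l, 1 ≤ k → 1 ≤ l → k ≠ l → Disjoint (A k) (A l)) ∧
    ∃ K, ∀ k, K ≤ k → A k = ∅ ∧ B k = ∅ := by
  classical
  have memA : ∀ k, 2 ≤ k → ∀ i, i ∈ A k ↔ (i ∉ A (k - 1) ∧ ∃ j ∈ B (k - 1), (i, j) ∈ S) := by
    intro k hk i
    rw [hA k hk]
    simp
  have memB : ∀ k, 1 ≤ k → ∀ j, j ∈ B k ↔ (j ∉ B (k - 1) ∧ ∃ i ∈ A k, (i, j) ∈ S) := by
    intro k hk j
    rw [hB k hk]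
    simp
  have F1 : ∀ k, 1 ≤ k → ∀ i ∈ A k, ∀ j, (i, j) ∈ S → j ∈ B (k - 1) ∨ j ∈ B k := by
    intro k hk i hi j hij
    by_cases h : j ∈ B (k - 1)
    · exact Or.inl h
    · exact Or.inr ((memB k hk j).2 ⟨h, i, hi, hij⟩)
  have F2 : ∀ k, 1 ≤ k → ∀ j ∈ B k, ∀ i, (i, j) ∈ S → i ∈ A k ∨ i ∈ A (k + 1) := by
    intro k hk j hj i hij
    by_cases h : i ∈ A k
    · exact Or.inl h
    · refine Or.inr ((memA (k + 1) (by omega) i).2 ?_)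
      have hk1 : k + 1 - 1 = k := by omega
      rw [hk1]
      exact ⟨h, j, hj, hij⟩
  have F3 : ∀ k, 2 ≤ k → ∀ i ∈ A k, i ∉ A (k - 1) ∧ ∃ j ∈ B (k - 1), (i, j) ∈ S :=
    fun k hk i hi => (memA k hk i).1 hi
  have F4 : ∀ k, 1 ≤ k → ∀ j ∈ B k, j ∉ B (k - 1) ∧ ∃ i ∈ A k, (i, j) ∈ S :=
    fun k hk j hj => (memB k hk j).1 hj
  have hclique : ∀ i ∈ A 1, ∀ j ∈ B 0, (i, j) ∈ S := by
    intro i hi j hj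
    obtain ⟨⟨D, E, hD, hE, hDE, hCeq, hCne⟩, -⟩ := hC
    have hmem : (i, j) ∈ A 1 ×ˢ B 0 := Finset.mem_product.2 ⟨hi, hj⟩
    rw [hCeq] at hmem
    exact hD.1.2.1 (Finset.mem_inter.1 hmem).1
  -- Main claim: layers at distance `d ≥ 1` are disjoint.
  have main : ∀ d, ∀ k, 1 ≤ d →
      (B k ∩ B (k + d) = ∅ ∧ (1 ≤ k → A k ∩ A (k + d) = ∅)) := by
    intro d
    induction d using Nat.strong_induction_on with
    | _ d IH =>
      intro k hd1
      rcases eq_or_lt_of_le hd1 with rfl | hd2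
      · -- d = 1 : consecutive layers, disjoint by definition
        constructor
        · rw [Finset.eq_empty_iff_forall_notMem]
          intro j hj
          rw [Finset.mem_inter] at hj
          have h := (F4 (k + 1) (by omega) j hj.2).1
          have hk1 : k + 1 - 1 = k := by omega
          rw [hk1] at h
          exact h hj.1
        · intro hk
          rw [Finset.eq_empty_iff_forall_notMem]
          intro i hi
          rw [Finset.mem_inter] at hi
          have h := (F3 (k + 1) (by omega) i hi.2).1
          have hk1 : k + 1 - 1 = k := by omega
          rw [hk1] at h
          exact h hi.1
      · -- 2 ≤ d
        induction k with
        | zero =>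
          constructor
          · -- the graph-theoretic base case : B 0 ∩ B d = ∅
            rw [Nat.zero_add, Finset.eq_empty_iff_forall_notMem]
            intro jstar hjstar
            rw [Finset.mem_inter] at hjstar
            obtain ⟨hj0, hjd⟩ := hjstar
            obtain ⟨-, i2, hi2Ad, hi2e⟩ := F4 d (by omega) jstar hjd
            rcases eq_or_lt_of_le (show 2 ≤ d by omega) with rfl | hd3
            · -- d = 2 : the double-square case
              have h21 : (2:ℕ) - 1 = 1 := by norm_num
              have hF3 := F3 2 le_rfl i2 hi2Ad
              rw [h21] at hF3
              obtain ⟨hi2n1, j1, hj1B1, hi2j1⟩ := hF3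
              have hF4 := F4 1 le_rfl j1 hj1B1
              have h10 : (1:ℕ) - 1 = 0 := by norm_num
              rw [h10] at hF4
              obtain ⟨hj1n0, i1, hi1A1, hi1j1⟩ := hF4
              exact base2 hG hC hi1A1 hj0 hi2n1 hj1n0 hi2e hi2j1 hi1j1
            · -- 3 ≤ d : the induced-cycle case
              have hBne : ∀ t t' (j : Fin n), t < t' → t' - t < d →
                  j ∈ B t → j ∈ B t' → False := by
                intro t t' j h1 h2 hj1 hj2
                have h0 := (IH (t' - t) (by omega) t (by omega)).1
                have he : t + (t' - t) = t' := by omega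
                rw [he] at h0
                have : j ∈ (∅ : Finset (Fin n)) := h0 ▸ Finset.mem_inter.2 ⟨hj1, hj2⟩
                exact absurd this (Finset.notMem_empty j)
              have hAne : ∀ t t' (i : Fin m), 1 ≤ t → t < t' → t' - t < d →
                  i ∈ A t → i ∈ A t' → False := by
                intro t t' i h0 h1 h2 hi1 hi2'
                have h3 := (IH (t' - t) (by omega) t (by omega)).2 h0
                have he : t + (t' - t) = t' := by omega
                rw [he] at h3
                have : i ∈ (∅ : Finset (Fin m)) := h3 ▸ Finset.mem_inter.2 ⟨hi1, hi2'⟩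
                exact absurd this (Finset.notMem_empty i)
              -- build the alternating path from level 1 to level d
              have chain : ∀ c, c ≤ d - 1 → ∃ (I : ℕ → Fin m) (J : ℕ → Fin n),
                  (∀ s, d - c ≤ s → s ≤ d → I s ∈ A s) ∧
                  (∀ s, d - c ≤ s → s < d →
                    J s ∈ B s ∧ (I s, J s) ∈ S ∧ (I (s + 1), J s) ∈ S) ∧
                  (I d, jstar) ∈ S := by
                intro c
                induction c with
                | zero =>
                  intro _
                  refine ⟨fun _ => i2, fun _ => jstar, ?_, ?_, hi2e⟩
                  · intro s hs1 hs2
                    have hsd : s = d := by omega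
                    rw [hsd]; exact hi2Ad
                  · intro s hs1 hs2; omega
                | succ c IHc =>
                  intro hc
                  obtain ⟨I, J, h1, h2, h3⟩ := IHc (by omega)
                  set t := d - (c + 1) with ht
                  have ht1 : 1 ≤ t := by omega
                  have htc : t + 1 = d - c := by omega
                  have hIt1 : I (t + 1) ∈ A (t + 1) := h1 (t + 1) (by omega) (by omega)
                  have hF3 := F3 (t + 1) (by omega) (I (t + 1)) hIt1
                  have htt : t + 1 - 1 = t := by omega
                  rw [htt] at hF3
                  obtain ⟨-, j, hjB, hje⟩ := hF3
                  obtain ⟨-, i, hiA, hie'⟩ := F4 t (by omega) j hjB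
                  refine ⟨Function.update I t i, Function.update J t j, ?_, ?_, ?_⟩
                  · intro s hs1 hs2
                    rcases eq_or_ne s t with rfl | hne
                    · rw [Function.update_self]; exact hiA
                    · rw [Function.update_of_ne hne]
                      exact h1 s (by omega) hs2
                  · intro s hs1 hs2
                    rcases eq_or_ne s t with rfl | hne
                    · simp only [Function.update_self,
                        Function.update_of_ne (show t + 1 ≠ t by omega)]
                      exact ⟨hjB, hie', hje⟩
                    · simp only [Function.update_of_ne hne,
                        Function.update_of_ne (show s + 1 ≠ t by omega)]
                      exact h2 s (by omega) hs2
                  · rw [Function.update_of_ne (show d ≠ t by omega)]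
                    exact h3
              obtain ⟨I, J, hIA, hJB, hId⟩ := chain (d - 1) le_rfl
              have hd1d : d - (d - 1) = 1 := by omega
              rw [hd1d] at hIA hJB
              have hJ0mem : ∀ t, t + 1 ≤ d → Function.update J 0 jstar t ∈ B t := by
                intro t htd
                rcases eq_or_ne t 0 with rfl | hne
                · rw [Function.update_self]; exact hj0
                · rw [Function.update_of_ne hne]
                  exact (hJB t (by omega) (by omega)).1
              refine hG.1 (2 * d) (by omega)
                (hasInducedCopy_cycle d (by omega) I (Function.update J 0 jstar) ?_ ?_ ?_)
              · intro s s' hs1 hs2 hs1' hs2' heq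
                by_contra hne
                rcases Nat.lt_or_ge s s' with h | h
                · exact hAne s s' (I s) hs1 h (by omega) (hIA s hs1 hs2)
                    (heq ▸ hIA s' hs1' hs2')
                · exact hAne s' s (I s) hs1' (by omega) (by omega)
                    (heq ▸ hIA s' hs1' hs2') (hIA s hs1 hs2)
              · intro t t' h1t h2t heq
                by_contra hne
                rcases Nat.lt_or_ge t t' with h | h
                · exact hBne t t' (Function.update J 0 jstar t) h (by omega)
                    (hJ0mem t h1t) (heq ▸ hJ0mem t' h2t)
                · exact hBne t' t (Function.update J 0 jstar t) (by omega) (by omega)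
                    (heq ▸ hJ0mem t' h2t) (hJ0mem t h1t)
              · intro s t hs1 hsd htd
                constructor
                · intro hmem
                  have hF1 := F1 s hs1 (I s) (hIA s hs1 hsd) (Function.update J 0 jstar t) hmem
                  rcases eq_or_ne t 0 with rfl | htne
                  · have hJ00 : Function.update J 0 jstar 0 ∈ B 0 := by
                      rw [Function.update_self]; exact hj0
                    rcases hF1 with hmem1 | hmem1
                    · rcases eq_or_lt_of_le hs1 with h | h
                      · left; omega
                      · exact absurd hmem1 (fun hm =>
                          hBne 0 (s - 1) _ (by omega) (by omega) hJ00 hm)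
                    · rcases eq_or_ne s d with rfl | hsd'
                      · right; right; exact ⟨rfl, rfl⟩
                      · exact absurd hmem1 (fun hm =>
                          hBne 0 s _ (by omega) (by omega) hJ00 hm)
                  · have hJt : Function.update J 0 jstar t ∈ B t := hJ0mem t htd
                    rcases hF1 with hmem1 | hmem1
                    · rcases eq_or_ne t (s - 1) with rfl | hne
                      · left; omega
                      · exfalso
                        rcases Nat.lt_or_ge t (s - 1) with h | h
                        · exact hBne t (s - 1) _ h (by omega) hJt hmem1
                        · exact hBne (s - 1) t _ (by omega) (by omega) hmem1 hJt
                    · rcases eq_or_ne t s with rfl | hne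
                      · right; left; exact ⟨rfl, by omega⟩
                      · exfalso
                        rcases Nat.lt_or_ge t s with h | h
                        · exact hBne t s _ h (by omega) hJt hmem1
                        · exact hBne s t _ (by omega) (by omega) hmem1 hJt
                · rintro (h | ⟨rfl, hsd'⟩ | ⟨rfl, rfl⟩)
                  · rcases eq_or_ne t 0 with rfl | htne
                    · rw [Function.update_self]
                      have hs : s = 1 := by omega
                      rw [hs]
                      exact hclique (I 1) (hIA 1 le_rfl (by omega)) jstar hj0
                    · rw [Function.update_of_ne htne]
                      have hedge2 := (hJB t (by omega) (by omega)).2.2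
                      rw [h] at hedge2
                      exact hedge2
                  · rw [Function.update_of_ne (show t ≠ 0 by omega)]
                    exact (hJB t (by omega) (by omega)).2.1
                  · rw [Function.update_self]
                    exact hId
          · intro h0; omega
        | succ k IHk =>
          have hApart : A (k + 1) ∩ A (k + 1 + d) = ∅ := by
            rw [Finset.eq_empty_iff_forall_notMem]
            intro i hi
            rw [Finset.mem_inter] at hi
            obtain ⟨hik, hikd⟩ := hi
            have hF3 := F3 (k + 1 + d) (by omega) i hikd
            have he : k + 1 + d - 1 = k + d := by omega
            rw [he] at hF3
            obtain ⟨-, j, hjB, hje⟩ := hF3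
            have hF1 := F1 (k + 1) (by omega) i hik j hje
            have hk1 : k + 1 - 1 = k := by omega
            rw [hk1] at hF1
            rcases hF1 with h | h
            · exact absurd (Finset.mem_inter.2 ⟨h, hjB⟩)
                (by rw [IHk.1]; exact Finset.notMem_empty _)
            · have hd1' := (IH (d - 1) (by omega) (k + 1) (by omega)).1
              have he2 : k + 1 + (d - 1) = k + d := by omega
              rw [he2] at hd1'
              exact absurd (Finset.mem_inter.2 ⟨h, hjB⟩)
                (by rw [hd1']; exact Finset.notMem_empty _)
          constructor
          · rw [Finset.eq_empty_iff_forall_notMem]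
            intro j hj
            rw [Finset.mem_inter] at hj
            obtain ⟨hjk, hjkd⟩ := hj
            obtain ⟨-, i, hiA, hie⟩ := F4 (k + 1 + d) (by omega) j hjkd
            rcases F2 (k + 1) (by omega) j hjk i hie with h | h
            · exact absurd (Finset.mem_inter.2 ⟨h, hiA⟩)
                (by rw [hApart]; exact Finset.notMem_empty _)
            · have he3 : k + 1 + 1 = k + 2 := by omega
              rw [he3] at h
              have hd1' := (IH (d - 1) (by omega) (k + 2) (by omega)).2 (by omega)
              have he2 : k + 2 + (d - 1) = k + 1 + d := by omega
              rw [he2] at hd1'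
              exact absurd (Finset.mem_inter.2 ⟨h, hiA⟩)
                (by rw [hd1']; exact Finset.notMem_empty _)
          · intro _; exact hApart
  have disj : ∀ k l, 1 ≤ k → 1 ≤ l → k ≠ l → Disjoint (A k) (A l) := by
    intro k l hk hl hne
    rw [Finset.disjoint_iff_inter_eq_empty]
    rcases Nat.lt_or_ge k l with h | h
    · have hm := (main (l - k) k (by omega)).2 hk
      have he : k + (l - k) = l := by omega
      rw [he] at hm
      exact hm
    · have hm := (main (k - l) l (by omega)).2 hl
      have he : l + (k - l) = k := by omega
      rw [he] at hm
      rw [Finset.inter_comm]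
      exact hm
  refine ⟨disj, ?_⟩
  have hstepB : ∀ k, 1 ≤ k → A k = ∅ → B k = ∅ := by
    intro k hk hAk
    rw [Finset.eq_empty_iff_forall_notMem]
    intro j hj
    obtain ⟨-, i, hi, -⟩ := (memB k hk j).1 hj
    rw [hAk] at hi
    exact absurd hi (Finset.notMem_empty _)
  have hstepA : ∀ k, 1 ≤ k → B k = ∅ → A (k + 1) = ∅ := by
    intro k hk hBk
    rw [Finset.eq_empty_iff_forall_notMem]
    intro i hi
    obtain ⟨-, j, hj, -⟩ := (memA (k + 1) (by omega) i).1 hi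
    have he : k + 1 - 1 = k := by omega
    rw [he, hBk] at hj
    exact absurd hj (Finset.notMem_empty _)
  have hCne0 : (A 1 ×ˢ B 0).Nonempty := by
    obtain ⟨⟨D, E, hD, hE, hDE, hCeq, hCne⟩, -⟩ := hC
    exact hCne
  obtain ⟨⟨a0, b0⟩, -⟩ := hCne0
  have hK : ∃ K, 1 ≤ K ∧ A K = ∅ := by
    by_contra hno
    push_neg at hno
    have hne : ∀ K ∈ Finset.Icc 1 (m + 1), (A K).Nonempty := fun K hKm =>
      hno K (Finset.mem_Icc.1 hKm).1
    set g : ℕ → Fin m := fun K => if h : (A K).Nonempty then h.choose else a0 with hg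
    have hgmem : ∀ K, (A K).Nonempty → g K ∈ A K := by
      intro K h
      simp only [hg, dif_pos h]
      exact h.choose_spec
    have hcard : (Finset.univ : Finset (Fin m)).card < (Finset.Icc 1 (m + 1)).card := by
      rw [Nat.card_Icc, Finset.card_univ, Fintype.card_fin]
      omega
    obtain ⟨x, hx, y, hy, hxy, hgxy⟩ := Finset.exists_ne_map_eq_of_card_lt_of_maps_to hcard
      (fun K _ => Finset.mem_univ (g K))
    have hxmem := hgmem x (hne x hx)
    have hymem := hgmem y (hne y hy)
    rw [hgxy] at hxmem
    have hd := disj x y (Finset.mem_Icc.1 hx).1 (Finset.mem_Icc.1 hy).1 hxy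
    exact absurd hymem (Finset.disjoint_left.1 hd hxmem)
  obtain ⟨K, hK1, hKempty⟩ := hK
  refine ⟨K, ?_⟩
  intro k hk
  induction k, hk using Nat.le_induction with
  | base => exact ⟨hKempty, hstepB K hK1 hKempty⟩
  | succ k hk IHk =>
    have hA1 : A (k + 1) = ∅ := hstepA k (by omega) IHk.2
    exact ⟨hA1, hstepB (k + 1) (by omega) hA1⟩
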